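/- Let A be a primitive axial algebra of Jordan type η over a field F with char F ≠ 2, generated by a closed set 𝒜 of η-axes with |𝒜| > 1, and suppose the map a ↦ τ_a on 𝒜 is injective. Let a, b ∈ 𝒜 be distinct. Then: (1) if (τ_a τ_b)² = 1 in Aut(A), then ab = 0; (2) if (τ_a τ_b)³ = 1 in Aut(A), then φ_a(b) = η/2. -/

import Mathlib

universe u v

section Prelim

variable (F : Type u) {A : Type v} [Field F] [NonUnitalNonAssocCommRing A]
  [Module F A] [SMulCommClass F A A] [IsScalarTower F A A]

/-- The λ-eigenspace of the adjoint map `ad_a : x ↦ a * x`. -/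
def eigSp (a : A) (l : F) : Submodule F A where
  carrier := {x | a * x = l • x}
  add_mem' := by
    intro x y hx hy
    simp only [Set.mem_setOf_eq] at *
    rw [mul_add, hx, hy, smul_add]
  zero_mem' := by simp
  smul_mem' := by
    intro c x hx
    simp only [Set.mem_setOf_eq] at *
    rw [mul_smul_comm, hx, smul_smul, smul_smul, mul_comm]

/-- `a` is a (primitive) `η`-axis. -/
structure IsAxis (η : F) (a : A) : Prop where
  ne_zero : a ≠ 0
  idem : a * a = a
  decomp : eigSp F a 1 ⊔ eigSp F a 0 ⊔ eigSp F a η = ⊤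
  prim : eigSp F a 1 = Submodule.span F {a}
  f11 : ∀ x ∈ eigSp F a 1, ∀ y ∈ eigSp F a 1, x * y ∈ eigSp F a 1
  f00 : ∀ x ∈ eigSp F a 0, ∀ y ∈ eigSp F a 0, x * y ∈ eigSp F a 0
  f10 : ∀ x ∈ eigSp F a 1, ∀ y ∈ eigSp F a 0, x * y = 0
  fpe : ∀ x ∈ eigSp F a 1 ⊔ eigSp F a 0, ∀ y ∈ eigSp F a η, x * y ∈ eigSp F a η
  fee : ∀ x ∈ eigSp F a η, ∀ y ∈ eigSp F a η, x * y ∈ eigSp F a 1 ⊔ eigSp F a 0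

/-- `τ` is the Miyamoto involution of the `η`-axis `a`. -/
structure IsMiyamoto (η : F) (a : A) (τ : A → A) : Prop where
  fixes : ∀ x ∈ eigSp F a 1 ⊔ eigSp F a 0, τ x = x
  negates : ∀ x ∈ eigSp F a η, τ x = -x
  map_add : ∀ x y : A, τ (x + y) = τ x + τ y
  map_smul : ∀ (c : F) (x : A), τ (c • x) = c • τ x
  map_mul : ∀ x y : A, τ (x * y) = τ x * τ y
  bijective : Function.Bijective τ

/-- `c = φ_a(u)`, the projection of `u` to `F·a` w.r.t. the axis `a`. -/
def IsProjCoeff (η : F) (a u : A) (c : F) : Prop :=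
  ∃ u0 ∈ eigSp F a 0, ∃ ue ∈ eigSp F a η, u = c • a + u0 + ue

/-- `e` is an identity element of the subalgebra `N`. -/
def IsIdentOf (N : NonUnitalSubalgebra F A) (e : A) : Prop :=
  e ∈ N ∧ ∀ z ∈ N, e * z = z

/-- `ψ` is an `F`-algebra automorphism of `A`. -/
structure IsAlgAut (ψ : A → A) : Prop where
  map_add : ∀ x y : A, ψ (x + y) = ψ x + ψ y
  map_smul : ∀ (c : F) (x : A), ψ (c • x) = c • ψ x
  map_mul : ∀ x y : A, ψ (x * y) = ψ x * ψ y
  bijective : Function.Bijective ψ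

/-- The graph `Δ_𝒜`: distinct axes are adjacent iff their product is nonzero. -/
def axesGraph (𝒜 : Set A) : SimpleGraph 𝒜 where
  Adj x y := x ≠ y ∧ (x : A) * (y : A) ≠ 0
  symm := by
    constructor
    rintro x y ⟨hxy, hm⟩
    exact ⟨hxy.symm, by rwa [mul_comm]⟩
  loopless := by constructor; rintro x ⟨h, -⟩; exact h rfl

/-- Multiplication of the Jordan algebra of Clifford type `J(V,B) = F·e ⊕ V`. -/
def cliffMul {V : Type*} [AddCommGroup V] [Module F V]
    (B : V →ₗ[F] V →ₗ[F] F) (x y : F × V) : F × V :=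
  (x.1 * y.1 + B x.2 y.2, x.1 • y.2 + y.1 • x.2)

end Prelim

/-- An isomorphism of `A` with a Jordan algebra of Clifford type `J(V,B)`. -/
structure CliffordTypeIso (F : Type u) (A : Type v) [Field F]
    [NonUnitalNonAssocCommRing A] [Module F A] [SMulCommClass F A A]
    [IsScalarTower F A A] where
  V : Type v
  [instAdd : AddCommGroup V]
  [instMod : Module F V]
  B : V →ₗ[F] V →ₗ[F] F
  symm : ∀ v w : V, B v w = B w v
  iso : A ≃ₗ[F] F × V
  mul_compat : ∀ x y : A, iso (x * y) = cliffMul F B (iso x) (iso y)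

section MyHelpers

variable {F : Type u} {A : Type v} [Field F] [NonUnitalNonAssocCommRing A]
  [Module F A] [SMulCommClass F A A] [IsScalarTower F A A]

lemma my_mem_eigSp {a x : A} {l : F} : x ∈ eigSp F a l ↔ a * x = l • x := Iff.rfl

lemma my_vec_zero {c : F} {x : A} (h : c • x = 0) (hc : c ≠ 0) : x = 0 := by
  have := congrArg (fun z => c⁻¹ • z) h
  simpa [smul_smul, inv_mul_cancel₀ hc] using this

lemma my_coeff_zero {c : F} {x : A} (h : c • x = 0) (hx : x ≠ 0) : c = 0 := by
  by_contra hc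
  exact hx (my_vec_zero h hc)

lemma my_axis_mem_one {η : F} {a : A} (h : IsAxis F η a) : a ∈ eigSp F a 1 := by
  rw [my_mem_eigSp, one_smul]; exact h.idem

lemma my_eig_disjoint {a x : A} {l m : F} (h : l ≠ m)
    (hl : x ∈ eigSp F a l) (hm : x ∈ eigSp F a m) : x = 0 := by
  have h1 : l • x = m • x := (my_mem_eigSp.mp hl).symm.trans (my_mem_eigSp.mp hm)
  have h2 : (l - m) • x = 0 := by rw [sub_smul, h1, sub_self]
  exact my_vec_zero h2 (sub_ne_zero.mpr h)

lemma my_exists_decomp {η : F} {a : A} (h : IsAxis F η a) (x : A) :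
    ∃ x1 ∈ eigSp F a 1, ∃ x0 ∈ eigSp F a 0, ∃ xe ∈ eigSp F a η, x = x1 + x0 + xe := by
  have hx : x ∈ eigSp F a 1 ⊔ eigSp F a 0 ⊔ eigSp F a η := h.decomp ▸ Submodule.mem_top
  obtain ⟨y, hy, xe, hxe, rfl⟩ := Submodule.mem_sup.mp hx
  obtain ⟨x1, h1, x0, h0, rfl⟩ := Submodule.mem_sup.mp hy
  exact ⟨x1, h1, x0, h0, xe, hxe, rfl⟩

lemma my_exists_projCoeff {η : F} {a : A} (h : IsAxis F η a) (x : A) :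
    ∃ c, IsProjCoeff F η a x c := by
  obtain ⟨x1, h1, x0, h0, xe, hxe, hx⟩ := my_exists_decomp h x
  rw [h.prim] at h1
  obtain ⟨c, rfl⟩ := Submodule.mem_span_singleton.mp h1
  exact ⟨c, x0, h0, xe, hxe, hx⟩

lemma my_miy_map_neg {η : F} {a : A} {σ : A → A} (h : IsMiyamoto F η a σ) (x : A) :
    σ (-x) = - σ x := by
  rw [← neg_one_smul F x, h.map_smul, neg_one_smul]

lemma my_miy_apply {η : F} {a : A} {σ : A → A} (h : IsMiyamoto F η a σ)
    {x1 x0 xe : A} (h1 : x1 ∈ eigSp F a 1) (h0 : x0 ∈ eigSp F a 0)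
    (he : xe ∈ eigSp F a η) : σ (x1 + x0 + xe) = x1 + x0 - xe := by
  rw [h.map_add,
    h.fixes _ (Submodule.add_mem _ (Submodule.mem_sup_left h1) (Submodule.mem_sup_right h0)),
    h.negates _ he, sub_eq_add_neg]

lemma my_miy_unique {η : F} {a : A} (hAx : IsAxis F η a) {σ σ' : A → A}
    (h : IsMiyamoto F η a σ) (h' : IsMiyamoto F η a σ') : σ = σ' := by
  funext x
  obtain ⟨x1, h1, x0, h0, xe, he, rfl⟩ := my_exists_decomp hAx x
  rw [my_miy_apply h h1 h0 he, my_miy_apply h' h1 h0 he]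

lemma my_miy_invol {η : F} {a : A} (hAx : IsAxis F η a) {σ : A → A}
    (h : IsMiyamoto F η a σ) (x : A) : σ (σ x) = x := by
  obtain ⟨x1, h1, x0, h0, xe, he, rfl⟩ := my_exists_decomp hAx x
  rw [my_miy_apply h h1 h0 he, sub_eq_add_neg, h.map_add,
    h.fixes _ (Submodule.add_mem _ (Submodule.mem_sup_left h1) (Submodule.mem_sup_right h0)),
    my_miy_map_neg h, h.negates _ he, neg_neg]

lemma my_miy_conj {η : F} {b : A} {σ ψ : A → A}
    (hσ : IsMiyamoto F η b σ)
    (hadd : ∀ x y, ψ (x + y) = ψ x + ψ y)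
    (hsmul : ∀ (c : F) (x : A), ψ (c • x) = c • ψ x)
    (hmul : ∀ x y, ψ (x * y) = ψ x * ψ y)
    (hinv : ∀ x, ψ (ψ x) = x) :
    IsMiyamoto F η (ψ b) (ψ ∘ σ ∘ ψ) := by
  have hbij : Function.Bijective ψ := Function.bijective_iff_has_inverse.mpr ⟨ψ, hinv, hinv⟩
  have hψinj : Function.Injective ψ := hbij.1
  have key : ∀ (l : F) (x : A), x ∈ eigSp F (ψ b) l ↔ ψ x ∈ eigSp F b l := by
    intro l x
    rw [my_mem_eigSp, my_mem_eigSp]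
    have e : ψ b * x = ψ (b * ψ x) := by rw [hmul, hinv]
    constructor
    · intro hx
      apply hψinj
      rw [hsmul, ← e, hx, hinv]
    · intro hx
      rw [e, hx, hsmul, hinv]
  have keysup : ∀ x, x ∈ eigSp F (ψ b) 1 ⊔ eigSp F (ψ b) 0 →
      ψ x ∈ eigSp F b 1 ⊔ eigSp F b 0 := by
    intro x hx
    obtain ⟨u, hu, v, hv, rfl⟩ := Submodule.mem_sup.mp hx
    rw [hadd]
    exact Submodule.add_mem _ (Submodule.mem_sup_left ((key 1 u).mp hu))
      (Submodule.mem_sup_right ((key 0 v).mp hv))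
  have hneg : ∀ y, ψ (-y) = - ψ y := fun y => by
    rw [← neg_one_smul F y, hsmul, neg_one_smul]
  refine ⟨?_, ?_, ?_, ?_, ?_, ?_⟩
  · intro x hx
    show ψ (σ (ψ x)) = x
    rw [hσ.fixes _ (keysup x hx), hinv]
  · intro x hx
    show ψ (σ (ψ x)) = -x
    rw [hσ.negates _ ((key η x).mp hx), hneg, hinv]
  · intro x y
    show ψ (σ (ψ (x + y))) = _
    rw [hadd, hσ.map_add, hadd]; rfl
  · intro c x
    show ψ (σ (ψ (c • x))) = _
    rw [hsmul, hσ.map_smul, hsmul]; rfl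
  · intro x y
    show ψ (σ (ψ (x * y))) = _
    rw [hmul, hσ.map_mul, hmul]; rfl
  · exact hbij.comp (hσ.bijective.comp hbij)

lemma my_mul_of_decomp {η : F} {a : A} (hAx : IsAxis F η a) {c : F} {b0 be : A}
    (h0 : b0 ∈ eigSp F a 0) (he : be ∈ eigSp F a η) :
    a * (c • a + b0 + be) = c • a + η • be := by
  rw [mul_add, mul_add, mul_smul_comm, hAx.idem,
    hAx.f10 a (my_axis_mem_one hAx) b0 h0, add_zero, my_mem_eigSp.mp he]

lemma my_miy_apply_decomp {η : F} {a : A} {σ : A → A} (h : IsMiyamoto F η a σ)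
    (hAx : IsAxis F η a) {c : F} {b0 be : A} (h0 : b0 ∈ eigSp F a 0)
    (he : be ∈ eigSp F a η) : σ (c • a + b0 + be) = c • a + b0 - be :=
  my_miy_apply h (Submodule.smul_mem _ c (my_axis_mem_one hAx)) h0 he

lemma my_scalar_of_idem {a b : A} (ha0 : a ≠ 0) (haa : a * a = a) (hbb : b * b = b)
    (hne : a ≠ b) (k : F) (h : a = k • b) : False := by
  have h2 : (k * k - k) • b = 0 := by
    have hsq : a * a = a := haa
    rw [h, smul_mul_assoc, mul_smul_comm, hbb, smul_smul] at hsq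
    rw [sub_smul, hsq, sub_self]
  rcases eq_or_ne b 0 with hb0 | hb0
  · exact ha0 (by rw [h, hb0, smul_zero])
  · have hk : k * k - k = 0 := my_coeff_zero h2 hb0
    have hk2 : k * (k - 1) = 0 := by linear_combination hk
    rcases mul_eq_zero.mp hk2 with h1 | h1
    · exact ha0 (by rw [h, h1, zero_smul])
    · exact hne (by rw [h, show k = 1 by linear_combination h1, one_smul])

end MyHelpers

/-- Suppose `A` is generated by a closed set `𝒜` of `η`-axes
with `|𝒜| > 1` and `a ↦ τ_a` is injective on `𝒜`.  For distinct `a, b ∈ 𝒜`: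
(1) if `(τ_a τ_b)² = 1` then `ab = 0`; (2) if `(τ_a τ_b)³ = 1` then
`φ_a(b) = η/2`. -/
theorem order_of_product_of_miyamotos
    {F : Type u} {A : Type v} [Field F] [NonUnitalNonAssocCommRing A]
    [Module F A] [SMulCommClass F A A] [IsScalarTower F A A]
    (hchar : (2 : F) ≠ 0) (η : F) (hη0 : η ≠ 0) (hη1 : η ≠ 1)
    (𝒜 : Set A) (h𝒜 : ∀ a ∈ 𝒜, IsAxis F η a)
    (hgen : NonUnitalAlgebra.adjoin F 𝒜 = ⊤)
    (τ : A → A → A) (hτ : ∀ a ∈ 𝒜, IsMiyamoto F η a (τ a))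
    (hclosed : ∀ a ∈ 𝒜, ∀ b ∈ 𝒜, τ b a ∈ 𝒜)
    (hcard : 𝒜.Nontrivial)
    (hinj : Set.InjOn τ 𝒜)
    (a : A) (ha : a ∈ 𝒜) (b : A) (hb : b ∈ 𝒜) (hab : a ≠ b) :
    ((τ a ∘ τ b) ∘ (τ a ∘ τ b) = id → a * b = 0) ∧
    ((τ a ∘ τ b) ∘ ((τ a ∘ τ b) ∘ (τ a ∘ τ b)) = id →
      ∀ φ : F, IsProjCoeff F η a b φ → φ = η / 2) := by
  have haxa := h𝒜 a ha
  have haxb := h𝒜 b hb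
  have hτa := hτ a ha
  have hτb := hτ b hb
  have ha2 : ∀ x, τ a (τ a x) = x := my_miy_invol haxa hτa
  have hb2 : ∀ x, τ b (τ b x) = x := my_miy_invol haxb hτb
  have hmemc : τ a b ∈ 𝒜 := hclosed b hb a ha
  have hmemd : τ b a ∈ 𝒜 := hclosed a ha b hb
  have hconjA : IsMiyamoto F η (τ a b) (τ a ∘ τ b ∘ τ a) :=
    my_miy_conj hτb hτa.map_add hτa.map_smul hτa.map_mul ha2
  have hconjB : IsMiyamoto F η (τ b a) (τ b ∘ τ a ∘ τ b) :=
    my_miy_conj hτa hτb.map_add hτb.map_smul hτb.map_mul hb2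
  have e1 : τ (τ a b) = τ a ∘ τ b ∘ τ a :=
    my_miy_unique (h𝒜 _ hmemc) (hτ _ hmemc) hconjA
  have e2 : τ (τ b a) = τ b ∘ τ a ∘ τ b :=
    my_miy_unique (h𝒜 _ hmemd) (hτ _ hmemd) hconjB
  constructor
  · intro h2
    have h2' : ∀ x, τ a (τ b (τ a (τ b x))) = x := fun x => congrFun h2 x
    have key : ∀ x, τ a (τ b (τ a x)) = τ b x := by
      intro x
      have h := h2' (τ b x)
      rwa [hb2 x] at h
    have hfun : τ a ∘ τ b ∘ τ a = τ b := funext fun x => key x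
    have heqτ : τ (τ a b) = τ b := e1.trans hfun
    have hfix : τ a b = b := hinj hmemc hb heqτ
    obtain ⟨φ, b0, h0, bη, he, hbdec⟩ := my_exists_projCoeff haxa b
    have hτab : τ a b = φ • a + b0 - bη := by
      rw [hbdec]
      exact my_miy_apply_decomp hτa haxa h0 he
    have hze : (2 : F) • bη = 0 := by
      have h' : φ • a + b0 - bη = φ • a + b0 + bη := by
        have := hτab.symm.trans hfix
        rw [hbdec] at this
        exact this
      linear_combination (norm := module) -h'
    have hbη0 : bη = 0 := my_vec_zero hze hchar
    have hbdec2 : b = φ • a + b0 := by rw [hbdec, hbη0, add_zero]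
    have hab0 : a * b0 = 0 := haxa.f10 a (my_axis_mem_one haxa) b0 h0
    have hb0a : b0 * a = 0 := by rw [mul_comm]; exact hab0
    have hm1 : a * b = φ • a := by
      rw [hbdec2, mul_add, mul_smul_comm, haxa.idem, hab0, add_zero]
    have hkey : (φ * φ) • a + b0 * b0 = φ • a + b0 := by
      have h := haxb.idem
      rw [hbdec2] at h
      simp only [mul_add, add_mul, smul_mul_assoc, mul_smul_comm, smul_smul,
        haxa.idem, hab0, hb0a, smul_zero, add_zero, zero_add] at h
      linear_combination (norm := module) h
    have hsep : (φ * φ - φ) • a = 0 := by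
      have hmem1 : (φ * φ - φ) • a ∈ eigSp F a 1 :=
        Submodule.smul_mem _ _ (my_axis_mem_one haxa)
      have hmem0 : (φ * φ - φ) • a ∈ eigSp F a 0 := by
        have hrw : (φ * φ - φ) • a = b0 - b0 * b0 := by
          linear_combination (norm := module) hkey
        rw [hrw]
        exact Submodule.sub_mem _ h0 (haxa.f00 b0 h0 b0 h0)
      exact my_eig_disjoint one_ne_zero hmem1 hmem0
    have hquad : φ * φ - φ = 0 := my_coeff_zero hsep haxa.ne_zero
    have hquad2 : φ * (φ - 1) = 0 := by linear_combination hquad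
    rcases mul_eq_zero.mp hquad2 with h1 | h1
    · rw [hm1, h1, zero_smul]
    · exfalso
      have hφ1 : φ = 1 := by linear_combination h1
      have hab_eq : a * b = a := by rw [hm1, hφ1, one_smul]
      have hmem1 : b - a ∈ eigSp F b 1 := by
        rw [my_mem_eigSp, one_smul, mul_sub, haxb.idem, mul_comm b a, hab_eq]
      rw [haxb.prim] at hmem1
      obtain ⟨c, hc⟩ := Submodule.mem_span_singleton.mp hmem1
      have hk : a = (1 - c) • b := by
        rw [sub_smul, one_smul, hc]
        abel
      exact my_scalar_of_idem haxa.ne_zero haxa.idem haxb.idem hab _ hk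
  · intro h3 φ hφ
    have h3' : ∀ x, τ a (τ b (τ a (τ b (τ a (τ b x))))) = x := fun x => congrFun h3 x
    have braid : ∀ x, τ a (τ b (τ a x)) = τ b (τ a (τ b x)) := by
      intro x
      have h := h3' (τ b x)
      rw [hb2 x] at h
      have h2 := congrArg (τ a) h
      rw [ha2] at h2
      have h3'' := congrArg (τ b) h2
      rw [hb2] at h3''
      exact h3''
    have e3 : τ a ∘ τ b ∘ τ a = τ b ∘ τ a ∘ τ b := funext fun x => braid x
    have heqτ : τ (τ a b) = τ (τ b a) := by rw [e1, e3, ← e2]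
    have hcd : τ a b = τ b a := hinj hmemc hmemd heqτ
    obtain ⟨b0, h0, bη, he, hbdec⟩ := hφ
    obtain ⟨ψ, a0, ha0, aη, hae, hadec⟩ := my_exists_projCoeff haxb a
    have hτab : τ a b = φ • a + b0 - bη := by
      rw [hbdec]
      exact my_miy_apply_decomp hτa haxa h0 he
    have hτba : τ b a = ψ • b + a0 - aη := by
      rw [hadec]
      exact my_miy_apply_decomp hτb haxb ha0 hae
    have hm1 : a * b = φ • a + η • bη := by
      rw [hbdec]
      exact my_mul_of_decomp haxa h0 he
    have hm2 : b * a = ψ • b + η • aη := by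
      rw [hadec]
      exact my_mul_of_decomp haxb ha0 hae
    have s4 : φ • a + η • bη = ψ • b + η • aη :=
      hm1.symm.trans ((mul_comm a b).trans hm2)
    have s1 : b - τ a b = (2 : F) • bη := by
      rw [hτab]
      nth_rewrite 1 [hbdec]
      module
    have s2 : a - τ b a = (2 : F) • aη := by
      rw [hτba]
      nth_rewrite 1 [hadec]
      module
    have main : (2 * φ - η) • a = (2 * ψ - η) • b := by
      linear_combination (norm := module) η • s1 - η • s2 + η • hcd + (2 : F) • s4
    by_cases hc : 2 * φ - η = 0
    · rw [eq_div_iff hchar]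
      linear_combination hc
    · exfalso
      have hk : a = ((2 * φ - η)⁻¹ * (2 * ψ - η)) • b := by
        have h := congrArg (fun z => (2 * φ - η)⁻¹ • z) main
        simpa [smul_smul, inv_mul_cancel₀ hc] using h
      exact my_scalar_of_idem haxa.ne_zero haxa.idem haxb.idem hab _ hk
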